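/- arXiv:2303.02055 — 3 statements merged into one kernel-verified Lean document; each statement's English description precedes it below -/
import Mathlib

section
/- Fix a ∈ [1,3] and r ∈ (0, 1/16]. Suppose for each k ≥ 0 a function a_k : {−1,1}^k → [1,a] is given, with a_0 ≡ 1. Define f : 𝓔 → ℝ by f(ε) = Σ_{k=1}^∞ (a_{k−1}(ε_1,…,ε_{k−1})/2) r^{k−1} ε_k, and for n ≥ 1 define f_n : 𝓔_n → ℝ by f_n(ε) = Σ_{k=1}^{n} (a_{k−1}(ε_1,…,ε_{k−1})/2) r^{k−1} ε_k. Then for all ε ≠ ε′ in 𝓔, (1 − ar/(1−r)) r^{m(ε,ε′)−1} ≤ |f(ε) − f(ε′)| ≤ (a/(1−r)) r^{m(ε,ε′)−1}, and the same two-sided inequality holds for f_n on 𝓔_n (with m(ε,ε′) ≤ n the first index of disagreement). In particular f and each f_n are injective and bi-Lipschitz from (𝓔, dist_r) (respectively (𝓔_n, dist_r)) onto their images. -/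
noncomputable section

/-- The sign `±1 : ℝ` associated to a boolean letter (so `𝓔 = {−1,1}^{ℕ≥1}` is encoded as
`ℕ → Bool`, index `k` corresponding to the paper's coordinate `ε_{k+1}`). -/
def sgn (b : Bool) : ℝ := if b then 1 else -1

/-- `f(ε) = Σ_{k=1}^∞ (a_{k−1}(ε)/2) r^{k−1} ε_k`, written with 0-based indices:
`f(ε) = Σ_{k≥0} (A k ε / 2) r^k sgn(ε k)`. -/
def fInf (r : ℝ) (A : ℕ → (ℕ → Bool) → ℝ) (ε : ℕ → Bool) : ℝ :=
  ∑' k : ℕ, A k ε / 2 * r ^ k * sgn (ε k)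

/-- The finite approximation `f_n(ε) = Σ_{k=1}^{n} (a_{k−1}(ε)/2) r^{k−1} ε_k`
(0-based: sum over `k < n`). -/
def fN (r : ℝ) (A : ℕ → (ℕ → Bool) → ℝ) (n : ℕ) (ε : ℕ → Bool) : ℝ :=
  ∑ k ∈ Finset.range n, A k ε / 2 * r ^ k * sgn (ε k)

/-- A word of length `n` (an element of `𝓔_n = {−1,1}^{{1,…,n}}`), extended to an infinite
word by `false` (i.e. `−1`). -/
def extWord (n : ℕ) (σ : Fin n → Bool) : ℕ → Bool :=
  fun k => if h : k < n then σ ⟨k, h⟩ else false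


lemma sgn_abs (b : Bool) : |sgn b| = 1 := by cases b <;> simp [sgn]

lemma sgn_sub_abs {b b' : Bool} (h : b ≠ b') : |sgn b - sgn b'| = 2 := by
  cases b <;> cases b' <;> simp_all [sgn] <;> norm_num

/-- Core term-by-term facts for the difference series. -/
lemma aux_core (a r : ℝ) (ha1 : 1 ≤ a) (hr0 : 0 < r)
    (A : ℕ → (ℕ → Bool) → ℝ)
    (hAbd : ∀ k ε, 1 ≤ A k ε ∧ A k ε ≤ a)
    (hAdep : ∀ k ε ε', (∀ j < k, ε j = ε' j) → A k ε = A k ε')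
    (ε ε' : ℕ → Bool) (m : ℕ) (hm : ∀ j < m, ε j = ε' j) (hne : ε m ≠ ε' m) :
    (∀ k < m, A k ε / 2 * r ^ k * sgn (ε k) - A k ε' / 2 * r ^ k * sgn (ε' k) = 0) ∧
    r ^ m ≤ |A m ε / 2 * r ^ m * sgn (ε m) - A m ε' / 2 * r ^ m * sgn (ε' m)| ∧
    |A m ε / 2 * r ^ m * sgn (ε m) - A m ε' / 2 * r ^ m * sgn (ε' m)| ≤ a * r ^ m ∧
    (∀ k, |A k ε / 2 * r ^ k * sgn (ε k) - A k ε' / 2 * r ^ k * sgn (ε' k)| ≤ a * r ^ k) := by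
  have hrm : (0:ℝ) < r ^ m := pow_pos hr0 m
  refine ⟨?_, ?_, ?_, ?_⟩
  · intro k hk
    have hA : A k ε = A k ε' := hAdep k _ _ (fun j hj => hm j (hj.trans hk))
    rw [hA, hm k hk]; ring
  · have hAm : A m ε = A m ε' := hAdep m _ _ hm
    have he : A m ε / 2 * r ^ m * sgn (ε m) - A m ε' / 2 * r ^ m * sgn (ε' m)
        = A m ε / 2 * r ^ m * (sgn (ε m) - sgn (ε' m)) := by rw [← hAm]; ring
    rw [he, abs_mul, sgn_sub_abs hne,
      abs_of_nonneg (mul_nonneg (by linarith [(hAbd m ε).1]) hrm.le)]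
    nlinarith [(hAbd m ε).1]
  · have hAm : A m ε = A m ε' := hAdep m _ _ hm
    have he : A m ε / 2 * r ^ m * sgn (ε m) - A m ε' / 2 * r ^ m * sgn (ε' m)
        = A m ε / 2 * r ^ m * (sgn (ε m) - sgn (ε' m)) := by rw [← hAm]; ring
    rw [he, abs_mul, sgn_sub_abs hne,
      abs_of_nonneg (mul_nonneg (by linarith [(hAbd m ε).1]) hrm.le)]
    nlinarith [(hAbd m ε).2]
  · intro k
    have h1 : |A k ε / 2 * r ^ k * sgn (ε k)| ≤ a / 2 * r ^ k := by
      rw [abs_mul, sgn_abs, mul_one, abs_mul,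
        abs_of_nonneg (by linarith [(hAbd k ε).1] : (0:ℝ) ≤ A k ε / 2),
        abs_of_nonneg (pow_nonneg hr0.le k)]
      exact mul_le_mul_of_nonneg_right (by linarith [(hAbd k ε).2]) (pow_nonneg hr0.le k)
    have h2 : |A k ε' / 2 * r ^ k * sgn (ε' k)| ≤ a / 2 * r ^ k := by
      rw [abs_mul, sgn_abs, mul_one, abs_mul,
        abs_of_nonneg (by linarith [(hAbd k ε').1] : (0:ℝ) ≤ A k ε' / 2),
        abs_of_nonneg (pow_nonneg hr0.le k)]
      exact mul_le_mul_of_nonneg_right (by linarith [(hAbd k ε').2]) (pow_nonneg hr0.le k)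
    calc |A k ε / 2 * r ^ k * sgn (ε k) - A k ε' / 2 * r ^ k * sgn (ε' k)|
        ≤ |A k ε / 2 * r ^ k * sgn (ε k)| + |A k ε' / 2 * r ^ k * sgn (ε' k)| := abs_sub _ _
      _ ≤ a / 2 * r ^ k + a / 2 * r ^ k := add_le_add h1 h2
      _ = a * r ^ k := by ring

lemma aux_arith (a r : ℝ) (hr0 : 0 < r) (hr1 : r < 1) (m : ℕ)
    (G T : ℝ) (h1 : r ^ m ≤ |G|) (h2 : |G| ≤ a * r ^ m)
    (hT : |T| ≤ a * r ^ (m + 1) / (1 - r)) :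
    (1 - a * r / (1 - r)) * r ^ m ≤ |G + T| ∧ |G + T| ≤ a / (1 - r) * r ^ m := by
  have h1r : (0:ℝ) < 1 - r := by linarith
  constructor
  · have hlow : |G| - |T| ≤ |G + T| := by
      have := abs_sub_abs_le_abs_sub G (-T)
      simp at this; linarith [abs_neg T ▸ this]
    have heq : (1 - a * r / (1 - r)) * r ^ m = r ^ m - a * r ^ (m + 1) / (1 - r) := by
      field_simp; ring
    rw [heq]; linarith
  · have : |G + T| ≤ |G| + |T| := abs_add_le G T
    have heq : a / (1 - r) * r ^ m = a * r ^ m + a * r ^ (m + 1) / (1 - r) := by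
      field_simp; ring
    rw [heq]; linarith

lemma aux_summ (a r : ℝ) (hr0 : 0 < r) (hr1 : r < 1)
    (A : ℕ → (ℕ → Bool) → ℝ) (hAbd : ∀ k ε, 1 ≤ A k ε ∧ A k ε ≤ a) (δ : ℕ → Bool) :
    Summable (fun k => A k δ / 2 * r ^ k * sgn (δ k)) := by
  apply Summable.of_norm_bounded
    ((summable_geometric_of_lt_one hr0.le hr1).mul_left a)
  intro k
  rw [Real.norm_eq_abs, abs_mul, sgn_abs, mul_one, abs_mul,
    abs_of_nonneg (by linarith [(hAbd k δ).1] : (0:ℝ) ≤ A k δ / 2),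
    abs_of_nonneg (pow_nonneg hr0.le k)]
  exact mul_le_mul_of_nonneg_right (by linarith [(hAbd k δ).1, (hAbd k δ).2])
    (pow_nonneg hr0.le k)

lemma aux_inf (a r : ℝ) (ha1 : 1 ≤ a) (hr0 : 0 < r) (hr1 : r < 1)
    (A : ℕ → (ℕ → Bool) → ℝ)
    (hAbd : ∀ k ε, 1 ≤ A k ε ∧ A k ε ≤ a)
    (hAdep : ∀ k ε ε', (∀ j < k, ε j = ε' j) → A k ε = A k ε')
    (ε ε' : ℕ → Bool) (m : ℕ) (hm : ∀ j < m, ε j = ε' j) (hne : ε m ≠ ε' m) :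
    (1 - a * r / (1 - r)) * r ^ m ≤ |fInf r A ε - fInf r A ε'| ∧
      |fInf r A ε - fInf r A ε'| ≤ a / (1 - r) * r ^ m := by
  set g : ℕ → ℝ :=
    fun k => A k ε / 2 * r ^ k * sgn (ε k) - A k ε' / 2 * r ^ k * sgn (ε' k) with hgdef
  obtain ⟨hg0, hgm1, hgm2, hgb⟩ := aux_core a r ha1 hr0 A hAbd hAdep ε ε' m hm hne
  have hgs : Summable g :=
    (aux_summ a r hr0 hr1 A hAbd ε).sub (aux_summ a r hr0 hr1 A hAbd ε')
  have hdiff : fInf r A ε - fInf r A ε' = ∑' k, g k :=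
    (Summable.tsum_sub (aux_summ a r hr0 hr1 A hAbd ε) (aux_summ a r hr0 hr1 A hAbd ε')).symm
  have hsplit : ∑ i ∈ Finset.range (m + 1), g i + ∑' i, g (i + (m + 1)) = ∑' i, g i :=
    hgs.sum_add_tsum_nat_add (m + 1)
  have hhead : ∑ i ∈ Finset.range (m + 1), g i = g m := by
    rw [Finset.sum_range_succ,
      Finset.sum_eq_zero (fun i hi => hg0 i (Finset.mem_range.mp hi)), zero_add]
  set T := ∑' i, g (i + (m + 1)) with hTdef
  have hTb : |T| ≤ a * r ^ (m + 1) / (1 - r) := by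
    have hsn : Summable fun i => ‖g (i + (m + 1))‖ := ((summable_nat_add_iff (m + 1)).2 hgs).norm
    have hsg : Summable fun i : ℕ => a * r ^ (m + 1) * r ^ i :=
      (summable_geometric_of_lt_one hr0.le hr1).mul_left _
    calc |T| ≤ ∑' i, ‖g (i + (m + 1))‖ := norm_tsum_le_tsum_norm hsn
      _ ≤ ∑' i : ℕ, a * r ^ (m + 1) * r ^ i := by
          refine Summable.tsum_le_tsum (fun i => ?_) hsn hsg
          rw [Real.norm_eq_abs]
          calc |g (i + (m + 1))| ≤ a * r ^ (i + (m + 1)) := hgb _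
            _ = a * r ^ (m + 1) * r ^ i := by rw [pow_add]; ring
      _ = a * r ^ (m + 1) * (1 - r)⁻¹ := by
          rw [tsum_mul_left, tsum_geometric_of_lt_one hr0.le hr1]
      _ = a * r ^ (m + 1) / (1 - r) := by rw [div_eq_mul_inv]
  have heq : fInf r A ε - fInf r A ε' = g m + T := by rw [hdiff, ← hsplit, hhead]
  rw [heq]
  exact aux_arith a r hr0 hr1 m (g m) T hgm1 hgm2 hTb

lemma aux_fin (a r : ℝ) (ha1 : 1 ≤ a) (hr0 : 0 < r) (hr1 : r < 1)
    (A : ℕ → (ℕ → Bool) → ℝ)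
    (hAbd : ∀ k ε, 1 ≤ A k ε ∧ A k ε ≤ a)
    (hAdep : ∀ k ε ε', (∀ j < k, ε j = ε' j) → A k ε = A k ε')
    (ε ε' : ℕ → Bool) (m n : ℕ) (hmn : m < n)
    (hm : ∀ j < m, ε j = ε' j) (hne : ε m ≠ ε' m) :
    (1 - a * r / (1 - r)) * r ^ m ≤ |fN r A n ε - fN r A n ε'| ∧
      |fN r A n ε - fN r A n ε'| ≤ a / (1 - r) * r ^ m := by
  set g : ℕ → ℝ :=
    fun k => A k ε / 2 * r ^ k * sgn (ε k) - A k ε' / 2 * r ^ k * sgn (ε' k) with hgdef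
  obtain ⟨hg0, hgm1, hgm2, hgb⟩ := aux_core a r ha1 hr0 A hAbd hAdep ε ε' m hm hne
  have hdiff : fN r A n ε - fN r A n ε' = ∑ k ∈ Finset.range n, g k := by
    rw [fN, fN, ← Finset.sum_sub_distrib]
  have hsplit : ∑ k ∈ Finset.range (m + 1), g k + ∑ k ∈ Finset.Ico (m + 1) n, g k
      = ∑ k ∈ Finset.range n, g k := Finset.sum_range_add_sum_Ico g hmn
  have hhead : ∑ i ∈ Finset.range (m + 1), g i = g m := by
    rw [Finset.sum_range_succ,
      Finset.sum_eq_zero (fun i hi => hg0 i (Finset.mem_range.mp hi)), zero_add]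
  set T := ∑ k ∈ Finset.Ico (m + 1) n, g k with hTdef
  have hsg : Summable fun i : ℕ => a * r ^ (m + 1) * r ^ i :=
    (summable_geometric_of_lt_one hr0.le hr1).mul_left _
  have hTb : |T| ≤ a * r ^ (m + 1) / (1 - r) := by
    calc |T| ≤ ∑ k ∈ Finset.Ico (m + 1) n, |g k| := Finset.abs_sum_le_sum_abs _ _
      _ ≤ ∑ k ∈ Finset.Ico (m + 1) n, a * r ^ k := Finset.sum_le_sum (fun k _ => hgb k)
      _ = ∑ j ∈ Finset.range (n - (m + 1)), a * r ^ (m + 1) * r ^ j := by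
          rw [Finset.sum_Ico_eq_sum_range]
          exact Finset.sum_congr rfl (fun j _ => by rw [pow_add]; ring)
      _ ≤ ∑' j : ℕ, a * r ^ (m + 1) * r ^ j := by
          refine Summable.sum_le_tsum _ (fun j _ => ?_) hsg
          have := pow_nonneg hr0.le
          positivity
      _ = a * r ^ (m + 1) * (1 - r)⁻¹ := by
          rw [tsum_mul_left, tsum_geometric_of_lt_one hr0.le hr1]
      _ = a * r ^ (m + 1) / (1 - r) := by rw [div_eq_mul_inv]
  have heq : fN r A n ε - fN r A n ε' = g m + T := by rw [hdiff, ← hsplit, hhead]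
  rw [heq]
  exact aux_arith a r hr0 hr1 m (g m) T hgm1 hgm2 hTb

/-- For `a ∈ [1,3]`, `r ∈ (0,1/16]` and coefficients `a_k(ε) ∈ [1,a]`
(depending only on the first `k` letters, `a_0 ≡ 1`), the maps `f` and `f_n` satisfy
`(1 − ar/(1−r)) r^{m(ε,ε′)−1} ≤ |f(ε) − f(ε′)| ≤ (a/(1−r)) r^{m(ε,ε′)−1}`,
where `m(ε,ε′)` is the first index of disagreement; in particular `f` and the `f_n`
are injective (bi-Lipschitz from `(𝓔, dist_r)` onto their images). -/
theorem stmt1 (a r : ℝ) (ha1 : 1 ≤ a) (ha3 : a ≤ 3) (hr0 : 0 < r) (hr1 : r ≤ 1 / 16)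
    (A : ℕ → (ℕ → Bool) → ℝ)
    (hA0 : ∀ ε, A 0 ε = 1)
    (hAbd : ∀ k ε, 1 ≤ A k ε ∧ A k ε ≤ a)
    (hAdep : ∀ k ε ε', (∀ j < k, ε j = ε' j) → A k ε = A k ε') :
    (∀ (ε ε' : ℕ → Bool) (h : ε ≠ ε'),
      (1 - a * r / (1 - r)) * r ^ Nat.find (Function.ne_iff.mp h)
          ≤ |fInf r A ε - fInf r A ε'| ∧
      |fInf r A ε - fInf r A ε'| ≤ a / (1 - r) * r ^ Nat.find (Function.ne_iff.mp h)) ∧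
    (∀ (n : ℕ) (σ σ' : Fin n → Bool) (h : extWord n σ ≠ extWord n σ'),
      (1 - a * r / (1 - r)) * r ^ Nat.find (Function.ne_iff.mp h)
          ≤ |fN r A n (extWord n σ) - fN r A n (extWord n σ')| ∧
      |fN r A n (extWord n σ) - fN r A n (extWord n σ')|
          ≤ a / (1 - r) * r ^ Nat.find (Function.ne_iff.mp h)) ∧
    Function.Injective (fInf r A) ∧
    (∀ n : ℕ, Function.Injective (fun σ : Fin n → Bool => fN r A n (extWord n σ))) := by
  have hr1' : r < 1 := by linarith
  have h1r : (0:ℝ) < 1 - r := by linarith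
  have part1 : ∀ (ε ε' : ℕ → Bool) (h : ε ≠ ε'),
      (1 - a * r / (1 - r)) * r ^ Nat.find (Function.ne_iff.mp h)
          ≤ |fInf r A ε - fInf r A ε'| ∧
      |fInf r A ε - fInf r A ε'| ≤ a / (1 - r) * r ^ Nat.find (Function.ne_iff.mp h) := by
    intro ε ε' h
    have hne := Nat.find_spec (Function.ne_iff.mp h)
    have hm : ∀ j < Nat.find (Function.ne_iff.mp h), ε j = ε' j :=
      fun j hj => not_not.mp (Nat.find_min (Function.ne_iff.mp h) hj)
    exact aux_inf a r ha1 hr0 hr1' A hAbd hAdep ε ε' _ hm hne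
  have part2 : ∀ (n : ℕ) (σ σ' : Fin n → Bool) (h : extWord n σ ≠ extWord n σ'),
      (1 - a * r / (1 - r)) * r ^ Nat.find (Function.ne_iff.mp h)
          ≤ |fN r A n (extWord n σ) - fN r A n (extWord n σ')| ∧
      |fN r A n (extWord n σ) - fN r A n (extWord n σ')|
          ≤ a / (1 - r) * r ^ Nat.find (Function.ne_iff.mp h) := by
    intro n σ σ' h
    have hne := Nat.find_spec (Function.ne_iff.mp h)
    have hm : ∀ j < Nat.find (Function.ne_iff.mp h), extWord n σ j = extWord n σ' j :=
      fun j hj => not_not.mp (Nat.find_min (Function.ne_iff.mp h) hj)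
    have hmn : Nat.find (Function.ne_iff.mp h) < n := by
      by_contra hc
      exact hne (by generalize Nat.find (Function.ne_iff.mp h) = m at hc ⊢; simp [extWord, hc])
    exact aux_fin a r ha1 hr0 hr1' A hAbd hAdep _ _ _ n hmn hm hne
  have hpos : (0:ℝ) < 1 - a * r / (1 - r) := by
    rw [sub_pos, div_lt_one h1r]
    nlinarith
  refine ⟨part1, part2, ?_, ?_⟩
  · intro ε ε' hf
    by_contra hne
    have hlow := (part1 ε ε' hne).1
    rw [sub_eq_zero.mpr hf, abs_zero] at hlow
    nlinarith [pow_pos hr0 (Nat.find (Function.ne_iff.mp hne)), hlow, hpos]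
  · intro n σ σ' hf
    by_contra hne
    have hext : extWord n σ ≠ extWord n σ' := by
      obtain ⟨i, hi⟩ := Function.ne_iff.mp hne
      intro hc
      apply hi
      have := congrFun hc i.val
      simpa [extWord, i.isLt] using this
    have hlow := (part2 n σ σ' hext).1
    simp only at hf
    rw [sub_eq_zero.mpr hf, abs_zero] at hlow
    nlinarith [pow_pos hr0 (Nat.find (Function.ne_iff.mp hext)), hlow, hpos]

end
end

section
/- Fix a ∈ [1,3] and r ∈ (0, 1/16], and let δ = ln 2 / ln(1/r). Suppose for each k ≥ 0 a function a_k : {−1,1}^k → [1,a] is given, with a_0 ≡ 1, and let f : 𝓔 → ℝ be defined by f(ε) = Σ_{k=1}^∞ (a_{k−1}(ε_1,…,ε_{k−1})/2) r^{k−1} ε_k. Let K = f(𝓔), let σ be the product probability measure on 𝓔, and let μ = f_*σ be the pushforward measure on K. Then K is compact and there is a constant C₀ ≥ 1 (depending only on a and r) such that C₀^{−1} ρ^δ ≤ μ(B(x,ρ)) ≤ C₀ ρ^δ for every x ∈ K and every 0 < ρ ≤ diam K; that is, K is Ahlfors regular of dimension δ. -/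
open MeasureTheory

noncomputable section

namespace Stmt2Aux

lemma abs_sgn (b : Bool) : |sgn b| = 1 := by cases b <;> simp [sgn]

variable {a r : ℝ} {A : ℕ → (ℕ → Bool) → ℝ}

lemma abs_term (hr0 : 0 < r) (hA : ∀ k ε, 1 ≤ A k ε ∧ A k ε ≤ a) (k : ℕ) (ε : ℕ → Bool) :
    |A k ε / 2 * r ^ k * sgn (ε k)| ≤ a / 2 * r ^ k := by
  have h1 := (hA k ε).1; have h2 := (hA k ε).2
  have hp : (0:ℝ) ≤ r ^ k := (pow_pos hr0 k).le
  rw [abs_mul, abs_mul, abs_sgn, mul_one, abs_div, abs_of_pos (by linarith : (0:ℝ) < A k ε),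
    abs_of_nonneg hp, show |(2:ℝ)| = 2 by norm_num]
  apply mul_le_mul_of_nonneg_right _ hp
  linarith

lemma summable_term (hr0 : 0 < r) (hr1 : r < 1) (hA : ∀ k ε, 1 ≤ A k ε ∧ A k ε ≤ a)
    (ε : ℕ → Bool) : Summable (fun k => A k ε / 2 * r ^ k * sgn (ε k)) := by
  apply Summable.of_norm_bounded ((summable_geometric_of_lt_one hr0.le hr1).mul_left (a/2))
  intro k; rw [Real.norm_eq_abs]; exact abs_term hr0 hA k ε

lemma tail_bound (hr0 : 0 < r) (hr1 : r < 1) (hA : ∀ k ε, 1 ≤ A k ε ∧ A k ε ≤ a)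
    (ε ε' : ℕ → Bool) (N : ℕ) :
    |∑' k : ℕ, (A (k + N) ε / 2 * r ^ (k + N) * sgn (ε (k + N))
      - A (k + N) ε' / 2 * r ^ (k + N) * sgn (ε' (k + N)))| ≤ a * r ^ N / (1 - r) := by
  have hgeo : HasSum (fun k : ℕ => a * r ^ N * r ^ k) (a * r ^ N * (1 - r)⁻¹) :=
    (hasSum_geometric_of_lt_one hr0.le hr1).mul_left _
  have hb : ∀ k : ℕ, ‖A (k + N) ε / 2 * r ^ (k + N) * sgn (ε (k + N))
      - A (k + N) ε' / 2 * r ^ (k + N) * sgn (ε' (k + N))‖ ≤ a * r ^ N * r ^ k := by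
    intro k
    calc ‖_ - _‖ ≤ ‖A (k + N) ε / 2 * r ^ (k + N) * sgn (ε (k + N))‖
          + ‖A (k + N) ε' / 2 * r ^ (k + N) * sgn (ε' (k + N))‖ := norm_sub_le _ _
      _ ≤ a / 2 * r ^ (k + N) + a / 2 * r ^ (k + N) := by
          rw [Real.norm_eq_abs, Real.norm_eq_abs]
          exact add_le_add (abs_term hr0 hA _ ε) (abs_term hr0 hA _ ε')
      _ = a * r ^ N * r ^ k := by rw [pow_add]; ring
  have := tsum_of_norm_bounded hgeo hb
  rw [Real.norm_eq_abs] at this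
  calc |_| ≤ a * r ^ N * (1 - r)⁻¹ := this
    _ = a * r ^ N / (1 - r) := by rw [div_eq_mul_inv]

lemma fInf_sub_eq (hr0 : 0 < r) (hr1 : r < 1) (hA : ∀ k ε, 1 ≤ A k ε ∧ A k ε ≤ a)
    (ε ε' : ℕ → Bool) (N : ℕ) :
    fInf r A ε - fInf r A ε' =
      (∑ k ∈ Finset.range N, (A k ε / 2 * r ^ k * sgn (ε k) - A k ε' / 2 * r ^ k * sgn (ε' k)))
      + ∑' k : ℕ, (A (k + N) ε / 2 * r ^ (k + N) * sgn (ε (k + N))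
          - A (k + N) ε' / 2 * r ^ (k + N) * sgn (ε' (k + N))) := by
  have hs := summable_term hr0 hr1 hA ε
  have hs' := summable_term hr0 hr1 hA ε'
  rw [fInf, fInf, ← hs.sum_add_tsum_nat_add N, ← hs'.sum_add_tsum_nat_add N,
    Finset.sum_sub_distrib,
    Summable.tsum_sub ((summable_nat_add_iff N).mpr hs) ((summable_nat_add_iff N).mpr hs')]
  ring

lemma est (hr0 : 0 < r) (hr1 : r < 1) (hA : ∀ k ε, 1 ≤ A k ε ∧ A k ε ≤ a)
    (hAdep : ∀ k ε ε', (∀ j < k, ε j = ε' j) → A k ε = A k ε')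
    {ε ε' : ℕ → Bool} {N : ℕ} (h : ∀ j < N, ε j = ε' j) :
    |fInf r A ε - fInf r A ε'| ≤ a * r ^ N / (1 - r) := by
  rw [fInf_sub_eq hr0 hr1 hA ε ε' N]
  have hzero : (∑ k ∈ Finset.range N,
      (A k ε / 2 * r ^ k * sgn (ε k) - A k ε' / 2 * r ^ k * sgn (ε' k))) = 0 := by
    apply Finset.sum_eq_zero
    intro k hk
    rw [Finset.mem_range] at hk
    rw [h k hk, hAdep k ε ε' (fun j hj => h j (hj.trans hk))]
    ring
  rw [hzero, zero_add]
  exact tail_bound hr0 hr1 hA ε ε' N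

lemma sep (hr0 : 0 < r) (hr1 : r < 1) (hA : ∀ k ε, 1 ≤ A k ε ∧ A k ε ≤ a)
    (hAdep : ∀ k ε ε', (∀ j < k, ε j = ε' j) → A k ε = A k ε')
    {ε ε' : ℕ → Bool} {N : ℕ} (h : ∀ j < N, ε j = ε' j) (hne : ε N ≠ ε' N) :
    r ^ N - a * r ^ (N + 1) / (1 - r) ≤ |fInf r A ε - fInf r A ε'| := by
  have hsplit := fInf_sub_eq hr0 hr1 hA ε ε' (N + 1)
  have hfin : (∑ k ∈ Finset.range (N + 1),
      (A k ε / 2 * r ^ k * sgn (ε k) - A k ε' / 2 * r ^ k * sgn (ε' k)))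
      = A N ε * r ^ N * sgn (ε N) := by
    rw [Finset.sum_range_succ]
    have hz : (∑ k ∈ Finset.range N,
        (A k ε / 2 * r ^ k * sgn (ε k) - A k ε' / 2 * r ^ k * sgn (ε' k))) = 0 := by
      apply Finset.sum_eq_zero
      intro k hk
      rw [Finset.mem_range] at hk
      rw [h k hk, hAdep k ε ε' (fun j hj => h j (hj.trans hk))]
      ring
    have hsgn : sgn (ε' N) = - sgn (ε N) := by
      cases hb : ε N <;> cases hb' : ε' N <;> simp_all [sgn]
    rw [hz, zero_add, hsgn, hAdep N ε ε' h]
    ring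
  have habs : |A N ε * r ^ N * sgn (ε N)| = A N ε * r ^ N := by
    rw [abs_mul, abs_sgn, mul_one, abs_mul, abs_of_pos (by linarith [(hA N ε).1] : (0:ℝ) < A N ε),
      abs_of_nonneg (pow_pos hr0 N).le]
  have h1 : r ^ N ≤ |A N ε * r ^ N * sgn (ε N)| := by
    rw [habs]
    nlinarith [(hA N ε).1, (pow_pos hr0 N).le]
  have h2 := tail_bound hr0 hr1 hA ε ε' (N + 1)
  set T := ∑' k : ℕ, (A (k + (N + 1)) ε / 2 * r ^ (k + (N + 1)) * sgn (ε (k + (N + 1)))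
      - A (k + (N + 1)) ε' / 2 * r ^ (k + (N + 1)) * sgn (ε' (k + (N + 1)))) with hT
  set F := A N ε * r ^ N * sgn (ε N) with hF
  rw [hsplit, hfin]
  have h3 : |F| ≤ |F + T| + |T| := by
    have := abs_add_le (F + T) (-T)
    simpa using this
  linarith

lemma continuous_fInf (hr0 : 0 < r) (hr1 : r < 1) (hA : ∀ k ε, 1 ≤ A k ε ∧ A k ε ≤ a)
    (hAdep : ∀ k ε ε', (∀ j < k, ε j = ε' j) → A k ε = A k ε') :
    Continuous (fInf r A) := by
  apply continuous_tsum (u := fun k => a / 2 * r ^ k)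
  · intro k
    have hAcont : Continuous fun ε => A k ε := by
      rw [continuous_iff_continuousAt]
      intro ε
      have hUeq : {ε' : ℕ → Bool | ∀ j < k, ε' j = ε j}
          = ⋂ j ∈ Finset.range k, {ε' : ℕ → Bool | ε' j = ε j} := by
        ext ε'; simp
      have hU : IsOpen {ε' : ℕ → Bool | ∀ j < k, ε' j = ε j} := by
        rw [hUeq]
        refine isOpen_biInter_finset fun j _ => ?_
        have : {ε' : ℕ → Bool | ε' j = ε j} = (fun ε' : ℕ → Bool => ε' j) ⁻¹' {ε j} := by
          ext ε'; simp
        rw [this]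
        exact (isOpen_discrete {ε j}).preimage (continuous_apply j)
      have hmem : {ε' : ℕ → Bool | ∀ j < k, ε' j = ε j} ∈ nhds ε :=
        hU.mem_nhds (fun j _ => rfl)
      exact Filter.EventuallyEq.continuousAt (y := A k ε)
        (Filter.eventuallyEq_of_mem hmem (fun ε' hε' => hAdep k ε' ε hε'))
    have hsgn : Continuous fun ε : ℕ → Bool => sgn (ε k) :=
      Continuous.comp (continuous_of_discreteTopology (α := Bool) (f := sgn)) (continuous_apply k)
    exact ((hAcont.div_const 2).mul continuous_const).mul hsgn
  · exact (summable_geometric_of_lt_one hr0.le hr1).mul_left _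
  · intro k ε; rw [Real.norm_eq_abs]; exact abs_term hr0 hA k ε

end Stmt2Aux

/-- Let `a ∈ [1,3]`, `r ∈ (0,1/16]`, `δ = ln 2 / ln(1/r)`, and let
`f : 𝓔 → ℝ` be built from coefficients `a_k(ε) ∈ [1,a]` depending only on the first `k`
letters, with `a_0 ≡ 1`. Let `σ` be the product probability measure on `𝓔` (characterized
by its values `2⁻ⁿ` on cylinders of length `n`), `K = f(𝓔)` and `μ = f_*σ`. Then `K` is
compact and `μ` witnesses that `K` is Ahlfors regular of dimension `δ`:
`C₀⁻¹ ρ^δ ≤ μ(B(x,ρ)) ≤ C₀ ρ^δ` for `x ∈ K` and `0 < ρ ≤ diam K`. -/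
theorem stmt2 (a r : ℝ) (ha1 : 1 ≤ a) (ha3 : a ≤ 3) (hr0 : 0 < r) (hr1 : r ≤ 1 / 16)
    (δ : ℝ) (hδ : δ = Real.log 2 / Real.log (1 / r))
    (A : ℕ → (ℕ → Bool) → ℝ)
    (hA0 : ∀ ε, A 0 ε = 1)
    (hAbd : ∀ k ε, 1 ≤ A k ε ∧ A k ε ≤ a)
    (hAdep : ∀ k ε ε', (∀ j < k, ε j = ε' j) → A k ε = A k ε')
    (σ : Measure (ℕ → Bool)) (hprob : IsProbabilityMeasure σ)
    (hcyl : ∀ (n : ℕ) (ε : ℕ → Bool),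
      σ {ε' | ∀ k < n, ε' k = ε k} = (2 : ENNReal)⁻¹ ^ n) :
    IsCompact (Set.range (fInf r A)) ∧
    ∃ C₀ : ℝ, 1 ≤ C₀ ∧ ∀ x ∈ Set.range (fInf r A), ∀ ρ : ℝ,
      0 < ρ → ρ ≤ Metric.diam (Set.range (fInf r A)) →
      C₀⁻¹ * ρ ^ δ ≤ ((σ.map (fInf r A)) (Metric.closedBall x ρ)).toReal ∧
      ((σ.map (fInf r A)) (Metric.closedBall x ρ)).toReal ≤ C₀ * ρ ^ δ := by
  classical
  have hr1' : r < 1 := lt_of_le_of_lt hr1 (by norm_num)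
  have hcont := Stmt2Aux.continuous_fInf hr0 hr1' hAbd hAdep
  have hmeas : Measurable (fInf r A) := hcont.measurable
  refine ⟨isCompact_range hcont, 16 / (5 * r), ?_, ?_⟩
  · rw [le_div_iff₀ (by positivity)]
    nlinarith
  intro x hx ρ hρ0 hρdiam
  obtain ⟨ε₀, hε₀⟩ := hx
  have h1r : (0:ℝ) < 1 - r := by linarith
  have hest : ∀ (ε ε' : ℕ → Bool) (N : ℕ), (∀ j < N, ε j = ε' j) →
      |fInf r A ε - fInf r A ε'| ≤ 16/5 * r ^ N := by
    intro ε ε' N h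
    refine (Stmt2Aux.est hr0 hr1' hAbd hAdep h).trans ?_
    rw [div_le_iff₀ h1r]
    nlinarith [pow_nonneg hr0.le N]
  have hsep : ∀ (ε ε' : ℕ → Bool) (N : ℕ), (∀ j < N, ε j = ε' j) → ε N ≠ ε' N →
      4/5 * r ^ N ≤ |fInf r A ε - fInf r A ε'| := by
    intro ε ε' N h hne
    refine le_trans ?_ (Stmt2Aux.sep hr0 hr1' hAbd hAdep h hne)
    have h2 : a * r ^ (N+1) / (1 - r) ≤ 1/5 * r ^ N := by
      rw [div_le_iff₀ h1r, pow_succ]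
      nlinarith [pow_nonneg hr0.le N, mul_le_mul_of_nonneg_left hr1 (pow_nonneg hr0.le N)]
    linarith
  have hdiam : Metric.diam (Set.range (fInf r A)) ≤ 16/5 := by
    apply Metric.diam_le_of_forall_dist_le (by norm_num)
    rintro y ⟨e, rfl⟩ z ⟨e', rfl⟩
    rw [Real.dist_eq]
    have := hest e e' 0 (fun j hj => absurd hj (Nat.not_lt_zero j))
    simpa using this
  have hρ16 : ρ ≤ 16/5 := hρdiam.trans hdiam
  -- facts about δ
  have hlogr : Real.log r < 0 := Real.log_neg hr0 hr1'
  have hlog1r : Real.log (1/r) = - Real.log r := by rw [one_div, Real.log_inv]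
  have hlogpos : 0 < Real.log (1/r) := by rw [hlog1r]; linarith
  have hδ0 : 0 < δ := by rw [hδ]; exact div_pos (Real.log_pos (by norm_num)) hlogpos
  have hδ1 : δ ≤ 1 := by
    rw [hδ, div_le_one hlogpos, hlog1r]
    have h16 : Real.log (1/16) = - Real.log 16 := by rw [one_div, Real.log_inv]
    have ha' : Real.log r ≤ Real.log (1/16) := Real.log_le_log hr0 hr1
    have hb' : Real.log 2 ≤ Real.log 16 := Real.log_le_log (by norm_num) (by norm_num)
    linarith
  have hrδ : r ^ δ = (2:ℝ)⁻¹ := by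
    rw [Real.rpow_def_of_pos hr0, hδ, hlog1r]
    have hlr : Real.log r ≠ 0 := ne_of_lt hlogr
    have heq : Real.log r * (Real.log 2 / -Real.log r) = - Real.log 2 := by
      rw [div_neg, mul_neg, mul_comm, div_mul_cancel₀ _ hlr]
    rw [heq, Real.exp_neg, Real.exp_log (by norm_num)]
  have h2r : ∀ N : ℕ, ((2:ℝ)⁻¹) ^ N = (r ^ N) ^ δ := by
    intro N
    rw [← hrδ, ← Real.rpow_natCast r N, ← Real.rpow_natCast (r ^ δ) N,
      ← Real.rpow_mul hr0.le, ← Real.rpow_mul hr0.le, mul_comm]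
  have hval : ∀ N : ℕ, ((2:ENNReal)⁻¹ ^ N).toReal = ((2:ℝ)⁻¹) ^ N := by
    intro N
    simp [ENNReal.toReal_pow]
  have hρδ : (0:ℝ) ≤ ρ ^ δ := Real.rpow_nonneg hρ0.le δ
  have hmapB : (σ.map (fInf r A)) (Metric.closedBall x ρ)
      = σ ((fInf r A) ⁻¹' Metric.closedBall x ρ) :=
    Measure.map_apply hmeas measurableSet_closedBall
  constructor
  · -- lower bound
    obtain ⟨m', hm'⟩ := exists_pow_lt_of_lt_one (show (0:ℝ) < 5/16 * ρ by positivity) hr1'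
    have hex2 : ∃ m : ℕ, 16/5 * r ^ m ≤ ρ := ⟨m', by nlinarith⟩
    set m := Nat.find hex2 with hm_def
    have hm : 16/5 * r ^ m ≤ ρ := Nat.find_spec hex2
    have hsub2 : {ε' | ∀ j < m, ε' j = ε₀ j} ⊆ (fInf r A) ⁻¹' Metric.closedBall x ρ := by
      intro ε' h'
      simp only [Set.mem_preimage, Metric.mem_closedBall]
      rw [← hε₀, Real.dist_eq]
      have := hest ε' ε₀ m (fun j hj => h' j hj)
      linarith
    have hrm : 5*r/16 * ρ ≤ r ^ m := by
      rcases Nat.eq_zero_or_pos m with h0 | hpos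
      · rw [h0, pow_zero]; nlinarith
      · have hmin : ¬ (16/5 * r ^ (m-1) ≤ ρ) := Nat.find_min hex2 (Nat.sub_lt hpos one_pos)
        push_neg at hmin
        have hmm : r ^ m = r ^ (m-1) * r := by rw [← pow_succ, Nat.sub_add_cancel hpos]
        rw [hmm]; nlinarith
    have hge : (2:ENNReal)⁻¹ ^ m ≤ σ ((fInf r A) ⁻¹' Metric.closedBall x ρ) := by
      rw [← hcyl m ε₀]; exact measure_mono hsub2
    have h1 := ENNReal.toReal_mono (measure_ne_top σ _) hge
    rw [hval m] at h1
    have hrm2 : (5*r/16 * ρ) ^ δ ≤ (r ^ m) ^ δ :=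
      Real.rpow_le_rpow (by positivity) hrm hδ0.le
    have hsplitρ : (5*r/16 * ρ) ^ δ = (5*r/16)^δ * ρ^δ :=
      Real.mul_rpow (by positivity) hρ0.le
    have hbase : (5*r/16:ℝ) ≤ (5*r/16) ^ δ := by
      have := Real.rpow_le_rpow_of_exponent_ge (show (0:ℝ) < 5*r/16 by positivity)
        (by nlinarith : (5*r/16:ℝ) ≤ 1) hδ1
      rwa [Real.rpow_one] at this
    have hCinv : (16/(5*r))⁻¹ = 5*r/16 := by rw [inv_div]
    rw [hCinv, hmapB]
    calc 5*r/16 * ρ ^ δ ≤ (5*r/16)^δ * ρ^δ := mul_le_mul_of_nonneg_right hbase hρδ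
      _ = (5*r/16 * ρ) ^ δ := hsplitρ.symm
      _ ≤ (r ^ m) ^ δ := hrm2
      _ = ((2:ℝ)⁻¹) ^ m := (h2r m).symm
      _ ≤ _ := h1
  · -- upper bound
    obtain ⟨n', hn'⟩ := exists_pow_lt_of_lt_one hρ0 hr1'
    have hex1 : ∃ n : ℕ, 4/5 * r ^ n ≤ ρ := ⟨n', by nlinarith [pow_nonneg hr0.le n']⟩
    set n := Nat.find hex1 with hn_def
    have hn : 4/5 * r ^ n ≤ ρ := Nat.find_spec hex1
    have hsub1 : (fInf r A) ⁻¹' Metric.closedBall x ρ ⊆ {ε' | ∀ j < n, ε' j = ε₀ j} := by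
      intro ε' hmem'
      simp only [Set.mem_preimage, Metric.mem_closedBall] at hmem'
      rw [← hε₀, Real.dist_eq] at hmem'
      intro j hj
      by_contra hne
      have hexm : ∃ k, ε' k ≠ ε₀ k := ⟨j, hne⟩
      have hmj : Nat.find hexm ≤ j := Nat.find_min' hexm hne
      have hagree : ∀ i < Nat.find hexm, ε' i = ε₀ i :=
        fun i hi => not_not.mp (Nat.find_min hexm hi)
      have h45 := hsep ε' ε₀ (Nat.find hexm) hagree (Nat.find_spec hexm)
      exact Nat.find_min hex1 (lt_of_le_of_lt hmj hj) (h45.trans hmem')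
    have hle1 : (σ.map (fInf r A)) (Metric.closedBall x ρ) ≤ (2:ENNReal)⁻¹ ^ n := by
      rw [hmapB, ← hcyl n ε₀]; exact measure_mono hsub1
    have htop : ((2:ENNReal)⁻¹ ^ n) ≠ ⊤ := by
      apply ENNReal.pow_ne_top; simp
    have h1 := ENNReal.toReal_mono htop hle1
    rw [hval n] at h1
    have h2 : ((2:ℝ)⁻¹) ^ n ≤ (5/4 * ρ) ^ δ := by
      rw [h2r n]
      exact Real.rpow_le_rpow (pow_nonneg hr0.le n) (by linarith) hδ0.le
    have h3 : (5/4 * ρ) ^ δ ≤ 5/4 * ρ ^ δ := by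
      rw [Real.mul_rpow (by norm_num) hρ0.le]
      have h54 : (5/4:ℝ) ^ δ ≤ (5/4:ℝ) := by
        have := Real.rpow_le_rpow_of_exponent_le (show (1:ℝ) ≤ 5/4 by norm_num) hδ1
        rwa [Real.rpow_one] at this
      exact mul_le_mul_of_nonneg_right h54 hρδ
    have h4 : 5/4 * ρ ^ δ ≤ 16/(5*r) * ρ ^ δ := by
      have hC : (5/4:ℝ) ≤ 16/(5*r) := by
        rw [le_div_iff₀ (by positivity)]; nlinarith
      exact mul_le_mul_of_nonneg_right hC hρδ
    linarith


end
end

section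
/- Let δ ∈ (0,1) and C₀ ≥ 1, let K ⊂ ℝ×{0} ⊂ ℝ² be compact with at least two points, and let μ be a Borel measure with support in K satisfying C₀^{−1}ρ^δ ≤ μ(B(x,ρ)) ≤ C₀ρ^δ for all x ∈ K and 0 < ρ ≤ diam K. Then there is a constant C > 0, depending only on δ and C₀, such that for every x₀ ∈ K, every 0 < R ≤ 1, and y₀ = x₀ + (0,R), one has ∫_K ln(|y₀−z|/|x₀−z|) dμ(z) ≤ C R^δ. -/
open MeasureTheory Set

set_option maxHeartbeats 1000000 in
/-- Let `δ ∈ (0,1)`, `C₀ ≥ 1`. There is `C > 0`, depending only on `δ` and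
`C₀`, such that: for every compact `K ⊂ ℝ×{0} ⊂ ℝ²` (identified with the real axis of `ℂ`)
with at least two points, every Borel measure `μ` supported in `K` with
`C₀⁻¹ ρ^δ ≤ μ(B(x,ρ)) ≤ C₀ ρ^δ` for `x ∈ K`, `0 < ρ ≤ diam K`, every `x₀ ∈ K`,
`0 < R ≤ 1`, and `y₀ = x₀ + (0,R)`, one has `∫_K ln(|y₀−z|/|x₀−z|) dμ(z) ≤ C R^δ`. -/
theorem stmt14 (δ C₀ : ℝ) (hδ0 : 0 < δ) (hδ1 : δ < 1) (hC₀ : 1 ≤ C₀) :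
    ∃ C : ℝ, 0 < C ∧
      ∀ (K : Set ℂ) (μ : Measure ℂ),
        IsCompact K → K ⊆ {z : ℂ | z.im = 0} → (∃ p ∈ K, ∃ q ∈ K, p ≠ q) →
        μ Kᶜ = 0 →
        (∀ x ∈ K, ∀ ρ : ℝ, 0 < ρ → ρ ≤ Metric.diam K →
          C₀⁻¹ * ρ ^ δ ≤ (μ (Metric.closedBall x ρ)).toReal ∧
          (μ (Metric.closedBall x ρ)).toReal ≤ C₀ * ρ ^ δ) →
        ∀ x₀ ∈ K, ∀ R : ℝ, 0 < R → R ≤ 1 →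
          ∫ z, Real.log (‖x₀ + R * Complex.I - z‖ / ‖x₀ - z‖) ∂μ ≤ C * R ^ δ := by
  refine ⟨C₀ * (2 + 2 / δ), by positivity, ?_⟩
  intro K μ hK hKre htwo hKc hμ x₀ hx₀ R hR0 hR1
  obtain ⟨p, hp, q, hq, hpq⟩ := htwo
  set s : ℝ := δ / 2 with hs
  have hs0 : 0 < s := by positivity
  have hs1 : s < 1 / 2 := by rw [hs]; linarith
  set f : ℂ → ℝ := fun z => Real.log (‖x₀ + R * Complex.I - z‖ / ‖x₀ - z‖) with hf
  have hx₀im : x₀.im = 0 := hKre hx₀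
  have hbd : Bornology.IsBounded K := hK.isBounded
  have hdiam_pos : 0 < Metric.diam K := by
    have h1 := Metric.dist_le_diam_of_mem hbd hp hq
    have h2 := dist_pos.mpr hpq
    linarith
  -- measure of balls around x₀, small radii
  have hball_small : ∀ ρ : ℝ, 0 < ρ → ρ ≤ Metric.diam K →
      μ (Metric.closedBall x₀ ρ) ≤ ENNReal.ofReal (C₀ * ρ ^ δ) := by
    intro ρ h1 h2
    obtain ⟨hlow, hup⟩ := hμ x₀ hx₀ ρ h1 h2
    have hpos : 0 < C₀⁻¹ * ρ ^ δ := by positivity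
    have hne : μ (Metric.closedBall x₀ ρ) ≠ ⊤ := by
      intro h
      rw [h, ENNReal.toReal_top] at hlow
      linarith
    exact (ENNReal.le_ofReal_iff_toReal_le hne (by positivity)).mpr hup
  have hKsub : K ⊆ Metric.closedBall x₀ (Metric.diam K) := fun z hz =>
    Metric.mem_closedBall.mpr (Metric.dist_le_diam_of_mem hbd hz hx₀)
  -- measure of balls around x₀, all radii
  have hball : ∀ ρ : ℝ, 0 < ρ →
      μ (Metric.closedBall x₀ ρ) ≤ ENNReal.ofReal (C₀ * ρ ^ δ) := by
    intro ρ h1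
    rcases le_or_gt ρ (Metric.diam K) with h2 | h2
    · exact hball_small ρ h1 h2
    · calc μ (Metric.closedBall x₀ ρ)
          ≤ μ (Metric.closedBall x₀ (Metric.diam K) ∪ Kᶜ) := by
            refine measure_mono fun z _ => ?_
            by_cases hz : z ∈ K
            · exact Or.inl (hKsub hz)
            · exact Or.inr hz
        _ ≤ μ (Metric.closedBall x₀ (Metric.diam K)) + μ Kᶜ := measure_union_le _ _
        _ = μ (Metric.closedBall x₀ (Metric.diam K)) := by rw [hKc, add_zero]
        _ ≤ ENNReal.ofReal (C₀ * Metric.diam K ^ δ) := hball_small _ hdiam_pos le_rfl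
        _ ≤ ENNReal.ofReal (C₀ * ρ ^ δ) := by
            apply ENNReal.ofReal_le_ofReal
            have h3 := Real.rpow_le_rpow Metric.diam_nonneg h2.le hδ0.le
            nlinarith
  -- geometry: norms for real points
  have hnorm : ∀ z : ℂ, z.im = 0 →
      ‖x₀ - z‖ = |x₀.re - z.re| ∧
      ‖x₀ + R * Complex.I - z‖ = Real.sqrt ((x₀.re - z.re) ^ 2 + R ^ 2) := by
    intro z hz
    constructor
    · have h1 : x₀ - z = ((x₀.re - z.re : ℝ) : ℂ) := by
        apply Complex.ext <;> simp [hx₀im, hz]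
      rw [h1, Complex.norm_real, Real.norm_eq_abs]
    · have hre : (x₀ + R * Complex.I - z).re = x₀.re - z.re := by simp
      have him : (x₀ + R * Complex.I - z).im = R := by simp [hx₀im, hz]
      rw [Complex.norm_def, Complex.normSq_apply, hre, him]
      ring_nf
  -- nonnegativity of f on real points
  have hf_nn : ∀ z : ℂ, z.im = 0 → 0 ≤ f z := by
    intro z hz
    obtain ⟨h1, h2⟩ := hnorm z hz
    set a := x₀.re - z.re
    by_cases ha : a = 0
    · have h0 : ‖x₀ - z‖ = 0 := by rw [h1, ha, abs_zero]
      show 0 ≤ Real.log (‖x₀ + ↑R * Complex.I - z‖ / ‖x₀ - z‖)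
      rw [h0, div_zero, Real.log_zero]
    · apply Real.log_nonneg
      rw [h1, h2, le_div_iff₀ (abs_pos.mpr ha), one_mul]
      calc |a| = Real.sqrt (a ^ 2) := (Real.sqrt_sq_eq_abs a).symm
        _ ≤ Real.sqrt (a ^ 2 + R ^ 2) := Real.sqrt_le_sqrt (by nlinarith)
  -- superlevel sets are contained in balls
  have hlevel : ∀ t : ℝ, 0 < t → ∀ z : ℂ, z.im = 0 → t < f z →
      z ∈ Metric.closedBall x₀ (R / Real.sqrt (Real.exp (2 * t) - 1)) := by
    intro t ht z hz htf
    obtain ⟨h1, h2⟩ := hnorm z hz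
    set a := x₀.re - z.re with ha_def
    have ha : a ≠ 0 := by
      intro ha0
      have h0 : ‖x₀ - z‖ = 0 := by rw [h1, ha0, abs_zero]
      have hfz : f z = 0 := by
        show Real.log (‖x₀ + ↑R * Complex.I - z‖ / ‖x₀ - z‖) = 0
        rw [h0, div_zero, Real.log_zero]
      rw [hfz] at htf; linarith
    have hapos : 0 < |a| := abs_pos.mpr ha
    have hqpos : 0 < Real.sqrt (a ^ 2 + R ^ 2) / |a| := by
      apply div_pos _ hapos
      apply Real.sqrt_pos.mpr; nlinarith
    have hexp : Real.exp t < Real.sqrt (a ^ 2 + R ^ 2) / |a| := by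
      simp only [hf] at htf
      rw [h1, h2] at htf
      exact (Real.lt_log_iff_exp_lt hqpos).mp htf
    have hexp2 : Real.exp t * |a| < Real.sqrt (a ^ 2 + R ^ 2) := by
      rw [← lt_div_iff₀ hapos]; exact hexp
    have hsq : Real.sqrt (a ^ 2 + R ^ 2) ^ 2 = a ^ 2 + R ^ 2 :=
      Real.sq_sqrt (by positivity)
    have hexp3 : Real.exp (2 * t) * a ^ 2 < a ^ 2 + R ^ 2 := by
      have h4 : (Real.exp t * |a|) ^ 2 < Real.sqrt (a ^ 2 + R ^ 2) ^ 2 := by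
        apply pow_lt_pow_left₀ hexp2 (by positivity)
        norm_num
      have h5 : Real.exp (2 * t) = Real.exp t * Real.exp t := by
        rw [two_mul, Real.exp_add]
      rw [hsq] at h4
      have h6 : |a| ^ 2 = a ^ 2 := sq_abs a
      nlinarith
    have hu : 0 < Real.exp (2 * t) - 1 := by
      have : (1 : ℝ) = Real.exp 0 := Real.exp_zero.symm
      rw [this]
      have := Real.exp_lt_exp.mpr (by linarith : (0:ℝ) < 2 * t)
      linarith
    have hia : a ^ 2 < R ^ 2 / (Real.exp (2 * t) - 1) := by
      rw [lt_div_iff₀ hu]; nlinarith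
    have habs : |a| < R / Real.sqrt (Real.exp (2 * t) - 1) := by
      calc |a| = Real.sqrt (a ^ 2) := (Real.sqrt_sq_eq_abs a).symm
        _ < Real.sqrt (R ^ 2 / (Real.exp (2 * t) - 1)) := by
            apply Real.sqrt_lt_sqrt (by positivity) hia
        _ = R / Real.sqrt (Real.exp (2 * t) - 1) := by
            rw [Real.sqrt_div (by positivity : (0:ℝ) ≤ R ^ 2), Real.sqrt_sq hR0.le]
    rw [Metric.mem_closedBall]
    have hdist : dist z x₀ = |a| := by
      have h7 : z - x₀ = ((z.re - x₀.re : ℝ) : ℂ) := by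
        apply Complex.ext <;> simp [hx₀im, hz]
      rw [dist_eq_norm, h7, Complex.norm_real, Real.norm_eq_abs, abs_sub_comm, ha_def]
    rw [hdist]
    exact habs.le
  -- the bounding function g
  have hu : ∀ t : ℝ, 0 < t → 0 < Real.exp (2 * t) - 1 := by
    intro t ht
    have h1 : Real.exp 0 < Real.exp (2 * t) := Real.exp_lt_exp.mpr (by linarith)
    rw [Real.exp_zero] at h1
    linarith
  set g : ℝ → ℝ := fun t => (Real.exp (2 * t) - 1) ^ (-s) with hg
  have hg_nn : ∀ t : ℝ, 0 < t → 0 ≤ g t := fun t ht =>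
    Real.rpow_nonneg (hu t ht).le _
  have hrho : ∀ t : ℝ, 0 < t →
      C₀ * (R / Real.sqrt (Real.exp (2 * t) - 1)) ^ δ = (C₀ * R ^ δ) * g t := by
    intro t ht
    have hu' := hu t ht
    have h12 : (1 / 2 : ℝ) * δ = s := by rw [hs]; ring
    simp only [hg]
    rw [Real.sqrt_eq_rpow, Real.div_rpow hR0.le (Real.rpow_nonneg hu'.le _),
      ← Real.rpow_mul hu'.le, h12, Real.rpow_neg hu'.le, div_eq_mul_inv]
    ring
  -- superlevel measure bound
  have hmeasbd : ∀ t : ℝ, 0 < t →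
      μ {z : ℂ | t < f z} ≤ ENNReal.ofReal (C₀ * R ^ δ) * ENNReal.ofReal (g t) := by
    intro t ht
    have hu' := hu t ht
    have hρpos : 0 < R / Real.sqrt (Real.exp (2 * t) - 1) :=
      div_pos hR0 (Real.sqrt_pos.mpr hu')
    calc μ {z : ℂ | t < f z}
        ≤ μ (Metric.closedBall x₀ (R / Real.sqrt (Real.exp (2 * t) - 1)) ∪ Kᶜ) := by
          refine measure_mono fun z hz => ?_
          by_cases hzK : z ∈ K
          · exact Or.inl (hlevel t ht z (hKre hzK) hz)
          · exact Or.inr hzK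
      _ ≤ μ (Metric.closedBall x₀ (R / Real.sqrt (Real.exp (2 * t) - 1))) + μ Kᶜ :=
          measure_union_le _ _
      _ = μ (Metric.closedBall x₀ (R / Real.sqrt (Real.exp (2 * t) - 1))) := by
          rw [hKc, add_zero]
      _ ≤ ENNReal.ofReal (C₀ * (R / Real.sqrt (Real.exp (2 * t) - 1)) ^ δ) := hball _ hρpos
      _ = ENNReal.ofReal ((C₀ * R ^ δ) * g t) := by rw [hrho t ht]
      _ = ENNReal.ofReal (C₀ * R ^ δ) * ENNReal.ofReal (g t) :=
          ENNReal.ofReal_mul (by positivity)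
  -- piece 1 : integral over (0,1]
  have hP1 : ∫⁻ t in Ioc (0:ℝ) 1, ENNReal.ofReal (g t) ≤ ENNReal.ofReal 2 := by
    have step1 : ∫⁻ t in Ioc (0:ℝ) 1, ENNReal.ofReal (g t)
        ≤ ∫⁻ t in Ioc (0:ℝ) 1, ENNReal.ofReal (t ^ (-s)) := by
      refine setLIntegral_mono' measurableSet_Ioc fun t ht => ?_
      apply ENNReal.ofReal_le_ofReal
      have ht0 : 0 < t := ht.1
      have hle : t ≤ Real.exp (2 * t) - 1 := by nlinarith [Real.add_one_le_exp (2 * t)]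
      exact Real.rpow_le_rpow_of_nonpos ht0 hle (by linarith)
    have hint : IntegrableOn (fun t : ℝ => t ^ (-s)) (Ioc 0 1) := by
      have h := intervalIntegral.intervalIntegrable_rpow' (show (-1:ℝ) < -s by linarith) (a := 0) (b := 1)
      rwa [intervalIntegrable_iff, uIoc_of_le zero_le_one] at h
    have hnnae : 0 ≤ᵐ[volume.restrict (Ioc (0:ℝ) 1)] fun t : ℝ => t ^ (-s) := by
      filter_upwards [ae_restrict_mem measurableSet_Ioc] with t ht
      exact Real.rpow_nonneg ht.1.le _
    have step2 : ∫⁻ t in Ioc (0:ℝ) 1, ENNReal.ofReal (t ^ (-s))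
        = ENNReal.ofReal (∫ t in Ioc (0:ℝ) 1, t ^ (-s)) :=
      (ofReal_integral_eq_lintegral_ofReal hint hnnae).symm
    have step3 : ∫ t in Ioc (0:ℝ) 1, t ^ (-s) ≤ 2 := by
      rw [← intervalIntegral.integral_of_le zero_le_one,
        integral_rpow (Or.inl (by linarith : (-1:ℝ) < -s))]
      rw [Real.one_rpow, Real.zero_rpow (by linarith : -s + 1 ≠ 0)]
      rw [div_le_iff₀ (by linarith : (0:ℝ) < -s + 1)]
      linarith
    calc ∫⁻ t in Ioc (0:ℝ) 1, ENNReal.ofReal (g t)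
        ≤ ∫⁻ t in Ioc (0:ℝ) 1, ENNReal.ofReal (t ^ (-s)) := step1
      _ = ENNReal.ofReal (∫ t in Ioc (0:ℝ) 1, t ^ (-s)) := step2
      _ ≤ ENNReal.ofReal 2 := ENNReal.ofReal_le_ofReal step3
  -- piece 2 : integral over (1,∞)
  have hP2 : ∫⁻ t in Ioi (1:ℝ), ENNReal.ofReal (g t) ≤ ENNReal.ofReal (2 / δ) := by
    have step1 : ∫⁻ t in Ioi (1:ℝ), ENNReal.ofReal (g t)
        ≤ ∫⁻ t in Ioi (1:ℝ), ENNReal.ofReal (2 * Real.exp (-(δ * t))) := by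
      refine setLIntegral_mono' measurableSet_Ioi fun t ht => ?_
      apply ENNReal.ofReal_le_ofReal
      have ht1 : (1:ℝ) < t := ht
      have hexp2 : Real.exp (2 * t) / 2 ≤ Real.exp (2 * t) - 1 := by
        nlinarith [Real.add_one_le_exp (2 * t)]
      have hpos2 : 0 < Real.exp (2 * t) / 2 := by positivity
      have e1 : (Real.exp (2 * t)) ^ (-s) = Real.exp (-(δ * t)) := by
        rw [← Real.exp_mul]
        congr 1
        rw [hs]; ring
      calc g t ≤ (Real.exp (2 * t) / 2) ^ (-s) :=
            Real.rpow_le_rpow_of_nonpos hpos2 hexp2 (by linarith)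
        _ = 2 ^ s * Real.exp (-(δ * t)) := by
            rw [Real.div_rpow (Real.exp_pos _).le (by norm_num : (0:ℝ) ≤ 2), e1,
              Real.rpow_neg (by norm_num : (0:ℝ) ≤ 2), div_inv_eq_mul]
            ring
        _ ≤ 2 * Real.exp (-(δ * t)) := by
            have h2s : (2:ℝ) ^ s ≤ 2 := by
              have := Real.rpow_le_rpow_of_exponent_le (by norm_num : (1:ℝ) ≤ 2)
                (by linarith : s ≤ 1)
              rwa [Real.rpow_one] at this
            have := Real.exp_pos (-(δ * t))
            nlinarith
    have hint : IntegrableOn (fun t : ℝ => 2 * Real.exp (-(δ * t))) (Ioi 1) := by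
      have h := (exp_neg_integrableOn_Ioi 1 hδ0).const_mul 2
      simpa [neg_mul, IntegrableOn] using h
    have hnnae : 0 ≤ᵐ[volume.restrict (Ioi (1:ℝ))] fun t : ℝ => 2 * Real.exp (-(δ * t)) :=
      Filter.Eventually.of_forall fun t => by positivity
    have step2 : ∫⁻ t in Ioi (1:ℝ), ENNReal.ofReal (2 * Real.exp (-(δ * t)))
        = ENNReal.ofReal (∫ t in Ioi (1:ℝ), 2 * Real.exp (-(δ * t))) :=
      (ofReal_integral_eq_lintegral_ofReal hint hnnae).symm
    have step3 : ∫ t in Ioi (1:ℝ), 2 * Real.exp (-(δ * t)) ≤ 2 / δ := by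
      rw [MeasureTheory.integral_const_mul]
      have hcomp : ∫ t in Ioi (1:ℝ), Real.exp (-(δ * t)) = δ⁻¹ * Real.exp (-δ) := by
        have h := integral_comp_mul_left_Ioi (fun x => Real.exp (-x)) 1 hδ0
        rw [integral_exp_neg_Ioi] at h
        simpa [smul_eq_mul, mul_one] using h
      rw [hcomp]
      have h1 : Real.exp (-δ) ≤ 1 := by
        have := Real.exp_le_exp.mpr (by linarith : -δ ≤ 0)
        rwa [Real.exp_zero] at this
      have h2 : (0:ℝ) < δ⁻¹ := inv_pos.mpr hδ0
      rw [div_eq_mul_inv]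
      nlinarith [Real.exp_pos (-δ)]
    calc ∫⁻ t in Ioi (1:ℝ), ENNReal.ofReal (g t)
        ≤ ∫⁻ t in Ioi (1:ℝ), ENNReal.ofReal (2 * Real.exp (-(δ * t))) := step1
      _ = ENNReal.ofReal (∫ t in Ioi (1:ℝ), 2 * Real.exp (-(δ * t))) := step2
      _ ≤ ENNReal.ofReal (2 / δ) := ENNReal.ofReal_le_ofReal step3
  -- measurability of f and a.e. facts
  have hmeasf : Measurable f := by
    apply Real.measurable_log.comp
    exact ((continuous_const.sub continuous_id).norm.measurable).div
      ((continuous_const.sub continuous_id).norm.measurable)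
  have haeK : ∀ᵐ z ∂μ, z ∈ K := by
    rw [ae_iff]
    exact hKc
  have hnnae : 0 ≤ᵐ[μ] f := haeK.mono fun z hz => hf_nn z (hKre hz)
  -- the main lintegral bound
  have key : ∫⁻ z, ENNReal.ofReal ‖f z‖ ∂μ
      ≤ ENNReal.ofReal (C₀ * (2 + 2 / δ) * R ^ δ) := by
    have e1 : ∫⁻ z, ENNReal.ofReal ‖f z‖ ∂μ = ∫⁻ z, ENNReal.ofReal (f z) ∂μ :=
      lintegral_congr_ae (hnnae.mono fun z hz => by
        show ENNReal.ofReal ‖f z‖ = ENNReal.ofReal (f z)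
        rw [Real.norm_of_nonneg hz])
    rw [e1, lintegral_eq_lintegral_meas_lt μ hnnae hmeasf.aemeasurable]
    have hIoi : Ioc (0:ℝ) 1 ∪ Ioi (1:ℝ) = Ioi (0:ℝ) := Ioc_union_Ioi_eq_Ioi zero_le_one
    calc ∫⁻ t in Ioi (0:ℝ), μ {z : ℂ | t < f z}
        ≤ ∫⁻ t in Ioi (0:ℝ), ENNReal.ofReal (C₀ * R ^ δ) * ENNReal.ofReal (g t) :=
          setLIntegral_mono' measurableSet_Ioi fun t ht => hmeasbd t ht
      _ = ENNReal.ofReal (C₀ * R ^ δ) * ∫⁻ t in Ioi (0:ℝ), ENNReal.ofReal (g t) :=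
          lintegral_const_mul' _ _ ENNReal.ofReal_ne_top
      _ ≤ ENNReal.ofReal (C₀ * R ^ δ) * (ENNReal.ofReal 2 + ENNReal.ofReal (2 / δ)) := by
          apply mul_le_mul_right
          rw [← hIoi, lintegral_union measurableSet_Ioi Ioc_disjoint_Ioi_same]
          exact add_le_add hP1 hP2
      _ ≤ ENNReal.ofReal (C₀ * (2 + 2 / δ) * R ^ δ) := by
          rw [← ENNReal.ofReal_add (by norm_num) (by positivity),
            ← ENNReal.ofReal_mul (by positivity)]
          exact ENNReal.ofReal_le_ofReal (le_of_eq (by ring))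
  -- conclusion
  calc ∫ z, f z ∂μ ≤ |∫ z, f z ∂μ| := le_abs_self _
    _ = ‖∫ z, f z ∂μ‖ := (Real.norm_eq_abs _).symm
    _ ≤ (∫⁻ z, ENNReal.ofReal ‖f z‖ ∂μ).toReal := norm_integral_le_lintegral_norm f
    _ ≤ C₀ * (2 + 2 / δ) * R ^ δ := ENNReal.toReal_le_of_le_ofReal (by positivity) key
end
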